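/- Let α ∈ [0,1) and ε ∈ [0,1]. Then the convex-combination uncertainty set admits the box description: {(1−ε)p + εq : q ∈ Q_CVaR(α)} = {r ∈ ℝⁿ : Σᵢ rᵢ = 1 and (1−ε)pᵢ ≤ rᵢ ≤ (1−ε)pᵢ + (ε/(1−α))pᵢ for all i}. -/

import Mathlib

/-- box description of the convex-combination uncertainty set:
`{(1−ε)p + εq : q ∈ Q_CVaR(α)} = {r : Σᵢ rᵢ = 1, (1−ε)pᵢ ≤ rᵢ ≤ (1−ε)pᵢ + (ε/(1−α))pᵢ}`. -/
theorem stmt10 (n : ℕ) (hn : 1 ≤ n) (p : Fin n → ℝ)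
    (hp1 : ∑ i, p i = 1) (hp : ∀ i, 0 < p i)
    (α : ℝ) (hα0 : 0 ≤ α) (hα1 : α < 1)
    (ε : ℝ) (hε0 : 0 ≤ ε) (hε1 : ε ≤ 1) :
    (fun q : Fin n → ℝ => fun i => (1 - ε) * p i + ε * q i) ''
      {q : Fin n → ℝ | (∑ i, q i = 1 ∧ ∀ i, 0 ≤ q i) ∧ ∀ i, q i ≤ p i / (1 - α)}
    = {r : Fin n → ℝ | ∑ i, r i = 1 ∧
        ∀ i, (1 - ε) * p i ≤ r i ∧ r i ≤ (1 - ε) * p i + (ε / (1 - α)) * p i} := by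
  have hα : 0 < 1 - α := by linarith
  ext r
  constructor
  · rintro ⟨q, ⟨⟨hq1, hq0⟩, hqle⟩, rfl⟩
    constructor
    · rw [Finset.sum_add_distrib, ← Finset.mul_sum, ← Finset.mul_sum, hp1, hq1]; ring
    · intro i
      constructor
      · show (1 - ε) * p i ≤ (1 - ε) * p i + ε * q i
        nlinarith [hq0 i]
      · have h1 := hqle i
        have h2 : ε * q i ≤ ε * (p i / (1 - α)) :=
          mul_le_mul_of_nonneg_left h1 hε0
        have h3 : ε * (p i / (1 - α)) = (ε / (1 - α)) * p i := by ring
        linarith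
  · rintro ⟨hr1, hbox⟩
    by_cases hε : ε = 0
    · subst hε
      refine ⟨p, ⟨⟨hp1, fun i => (hp i).le⟩, fun i => ?_⟩, ?_⟩
      · rw [le_div_iff₀ hα]; nlinarith [hp i]
      · funext i
        have h := hbox i
        simp only [sub_zero, one_mul, zero_mul, add_zero, zero_div] at h ⊢
        linarith [h.1, h.2]
    · have hεpos : 0 < ε := lt_of_le_of_ne hε0 (Ne.symm hε)
      refine ⟨fun i => (r i - (1 - ε) * p i) / ε, ⟨⟨?_, fun i => ?_⟩, fun i => ?_⟩, ?_⟩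
      · rw [← Finset.sum_div, Finset.sum_sub_distrib, hr1, ← Finset.mul_sum, hp1]
        field_simp
        ring
      · have h := (hbox i).1
        have : 0 ≤ r i - (1 - ε) * p i := by linarith
        positivity
      · rw [div_le_div_iff₀ hεpos hα]
        have h := (hbox i).2
        have h2 : r i - (1 - ε) * p i ≤ ε / (1 - α) * p i := by linarith
        have h3 : (r i - (1 - ε) * p i) * (1 - α) ≤ (ε / (1 - α) * p i) * (1 - α) :=
          mul_le_mul_of_nonneg_right h2 hα.le
        have h4 : (ε / (1 - α) * p i) * (1 - α) = p i * ε := by field_simp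
        linarith
      · funext i
        field_simp
        ring
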